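/- Let (K,R) be triangular with a twist F, and g a braided Lie algebra associated with (K,R). Then the K_F-module g (same underlying space, same action) with bracket [u,v]_F := [F̄ᵅ▷u, F̄_α▷v] is a braided Lie algebra associated with (K_F, R_F = F₂₁RF^{-1}): the twisted bracket is K_F-equivariant, R_F-antisymmetric, and satisfies the R_F-braided Jacobi identity. -/

import Mathlib

/-! STATEMENT 16: the twist of a braided Lie algebra associated with a triangular Hopf algebra is a braided Lie algebra over the twisted Hopf algebra. -/

noncomputable section
open TensorProduct

variable (𝕜 : Type*) [CommRing 𝕜]
variable (K : Type*) [Ring K] [HopfAlgebra 𝕜 K]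
/-- `Δ ⊗ id` as an algebra map `K ⊗ K → K ⊗ (K ⊗ K)`. -/
def comul12 : K ⊗[𝕜] K →ₐ[𝕜] K ⊗[𝕜] (K ⊗[𝕜] K) :=
  (Algebra.TensorProduct.assoc 𝕜 𝕜 𝕜 K K K).toAlgHom.comp
    (Algebra.TensorProduct.map (Bialgebra.comulAlgHom 𝕜 K) (AlgHom.id 𝕜 K))

/-- `id ⊗ Δ`. -/
def comul23 : K ⊗[𝕜] K →ₐ[𝕜] K ⊗[𝕜] (K ⊗[𝕜] K) :=
  Algebra.TensorProduct.map (AlgHom.id 𝕜 K) (Bialgebra.comulAlgHom 𝕜 K)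

/-- `x ⊗ y ↦ x ⊗ y ⊗ 1`. -/
def ins12 : K ⊗[𝕜] K →ₐ[𝕜] K ⊗[𝕜] (K ⊗[𝕜] K) :=
  Algebra.TensorProduct.map (AlgHom.id 𝕜 K) Algebra.TensorProduct.includeLeft

/-- `x ⊗ y ↦ 1 ⊗ x ⊗ y`. -/
def ins23 : K ⊗[𝕜] K →ₐ[𝕜] K ⊗[𝕜] (K ⊗[𝕜] K) :=
  Algebra.TensorProduct.includeRight

/-- `x ⊗ y ↦ x ⊗ 1 ⊗ y`. -/
def ins13 : K ⊗[𝕜] K →ₐ[𝕜] K ⊗[𝕜] (K ⊗[𝕜] K) :=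
  Algebra.TensorProduct.map (AlgHom.id 𝕜 K) Algebra.TensorProduct.includeRight

/-- Quasitriangular structure: `R` invertible with inverse `Ri`,
quasi-cocommutativity `τ(Δ k) R = R Δ k`, and the two hexagon relations. -/
structure QuasiTri (R Ri : K ⊗[𝕜] K) : Prop where
  mul_inv : R * Ri = 1
  inv_mul : Ri * R = 1
  quasi : ∀ k : K, (TensorProduct.comm 𝕜 K K) (Coalgebra.comul k) * R
      = R * (Coalgebra.comul k : K ⊗[𝕜] K)
  hex1 : comul12 𝕜 K R = ins13 𝕜 K R * ins23 𝕜 K R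
  hex2 : comul23 𝕜 K R = ins13 𝕜 K R * ins12 𝕜 K R
/-- `(ε ⊗ id)`. -/
def epsLlin : K ⊗[𝕜] K →ₗ[𝕜] K :=
  (TensorProduct.lid 𝕜 K).toLinearMap.comp
    (TensorProduct.map (Coalgebra.counit : K →ₗ[𝕜] 𝕜) LinearMap.id)

/-- `(id ⊗ ε)`. -/
def epsRlin : K ⊗[𝕜] K →ₗ[𝕜] K :=
  (TensorProduct.rid 𝕜 K).toLinearMap.comp
    (TensorProduct.map LinearMap.id (Coalgebra.counit : K →ₗ[𝕜] 𝕜))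

/-- A Drinfeld twist `F` (with inverse `Fi`) for the bialgebra `K`:
invertible, unital, and satisfying the cocycle condition
`(F ⊗ 1)(Δ ⊗ id)(F) = (1 ⊗ F)(id ⊗ Δ)(F)`. -/
structure IsTwist (F Fi : K ⊗[𝕜] K) : Prop where
  mul_inv : F * Fi = 1
  inv_mul : Fi * F = 1
  unitalL : epsLlin 𝕜 K F = 1
  unitalR : epsRlin 𝕜 K F = 1
  cocycle : ins12 𝕜 K F * comul12 𝕜 K F = ins23 𝕜 K F * comul23 𝕜 K F

/-- The twisted coproduct `Δ_F(k) = F Δ(k) F⁻¹`. -/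
def twistComul (F Fi : K ⊗[𝕜] K) : K →ₗ[𝕜] K ⊗[𝕜] K :=
  (LinearMap.mulLeft 𝕜 F).comp
    ((LinearMap.mulRight 𝕜 Fi).comp (Coalgebra.comul : K →ₗ[𝕜] K ⊗[𝕜] K))
/-- The twisted R-matrix `R_F = F₂₁ R F⁻¹`. -/
def twistR (F Fi R : K ⊗[𝕜] K) : K ⊗[𝕜] K :=
  (TensorProduct.comm 𝕜 K K) F * R * Fi
/-- Given an action `β` of `K` and a bilinear operation `μ` on `M`, the map
sending `t = Σ k₁ ⊗ k₂` and `a, b` to `Σ μ (k₁ ▷ a) (k₂ ▷ b)` (Sweedler-style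
combination). -/
def sweedlerOp {M : Type*} [AddCommGroup M] [Module 𝕜 M]
    (β : K →ₗ[𝕜] M →ₗ[𝕜] M) (μ : M →ₗ[𝕜] M →ₗ[𝕜] M) :
    K ⊗[𝕜] K →ₗ[𝕜] M →ₗ[𝕜] M →ₗ[𝕜] M :=
  TensorProduct.lift <| LinearMap.mk₂ 𝕜
    (fun k1 k2 => (μ.comp (β k1)).compl₂ (β k2))
    (fun k k' l => by ext a b; simp [LinearMap.compl₂_apply, map_add])
    (fun c k l => by ext a b; simp [LinearMap.compl₂_apply, map_smul])
    (fun k l l' => by ext a b; simp [LinearMap.compl₂_apply, map_add])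
    (fun c k l => by ext a b; simp [LinearMap.compl₂_apply, map_smul])

/-- A module-algebra action of the bialgebra `K` on the algebra `A`:
`act` is a representation of `K`, `k ▷ (ab) = (k₍₁₎ ▷ a)(k₍₂₎ ▷ b)` and
`k ▷ 1 = ε(k) 1`. -/
structure MAlgAction {A : Type*} [Ring A] [Algebra 𝕜 A]
    (act : K →ₗ[𝕜] A →ₗ[𝕜] A) : Prop where
  act_act : ∀ k l : K, act (k * l) = (act k).comp (act l)
  act_one : act 1 = LinearMap.id
  act_mul : ∀ (k : K) (a b : A),
    act k (a * b) = sweedlerOp 𝕜 K act (LinearMap.mul 𝕜 A) (Coalgebra.comul k) a b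
  act_unit : ∀ k : K, act k 1 = Coalgebra.counit (R := 𝕜) k • (1 : A)
variable {g : Type*} [AddCommGroup g] [Module 𝕜 g]

/-- `act` is a representation of `K` on `g`. -/
def IsRep (act : K →ₗ[𝕜] g →ₗ[𝕜] g) : Prop :=
  (∀ k l : K, act (k * l) = (act k).comp (act l)) ∧ act 1 = LinearMap.id

/-- `br` is a braided Lie bracket on the `K`-module `g` associated with the
triangular structure `R`: it is `K`-equivariant, braided antisymmetric and
satisfies the braided Jacobi identity. -/
def IsBraidedLie (act : K →ₗ[𝕜] g →ₗ[𝕜] g) (R : K ⊗[𝕜] K)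
    (br : g →ₗ[𝕜] g →ₗ[𝕜] g) : Prop :=
  (∀ (k : K) (u v : g),
    act k (br u v) = sweedlerOp 𝕜 K act br (Coalgebra.comul k) u v)
  ∧ (∀ u v : g,
    br u v = - sweedlerOp 𝕜 K act br ((TensorProduct.comm 𝕜 K K) R) v u)
  ∧ (∀ u v w : g,
    br u (br v w) = br (br u v) w
      + sweedlerOp 𝕜 K act (br.compl₂ (br.flip w))
          ((TensorProduct.comm 𝕜 K K) R) v u)

/-! ### Auxiliary machinery -/

section Aux16

variable {𝕜' : Type*} [CommRing 𝕜'] {K' : Type*} [Ring K'] [HopfAlgebra 𝕜' K']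
variable {g' : Type*} [AddCommGroup g'] [Module 𝕜' g']

lemma sweedlerOp_tmul (act : K' →ₗ[𝕜'] g' →ₗ[𝕜'] g') (μ : g' →ₗ[𝕜'] g' →ₗ[𝕜'] g')
    (k l : K') (a b : g') :
    sweedlerOp 𝕜' K' act μ (k ⊗ₜ l) a b = μ (act k a) (act l b) := by
  simp [sweedlerOp]

lemma sweedlerOp_mu_add (act : K' →ₗ[𝕜'] g' →ₗ[𝕜'] g') (μ μ' : g' →ₗ[𝕜'] g' →ₗ[𝕜'] g')
    (T : K' ⊗[𝕜'] K') (a b : g') :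
    sweedlerOp 𝕜' K' act (μ + μ') T a b
      = sweedlerOp 𝕜' K' act μ T a b + sweedlerOp 𝕜' K' act μ' T a b := by
  induction T using TensorProduct.induction_on with
  | zero => simp
  | tmul k l => simp [sweedlerOp_tmul]
  | add s t hs ht => simp [map_add, LinearMap.add_apply, hs, ht]; abel

lemma sweedlerOp_mu_smul (act : K' →ₗ[𝕜'] g' →ₗ[𝕜'] g') (c : 𝕜') (μ : g' →ₗ[𝕜'] g' →ₗ[𝕜'] g')
    (T : K' ⊗[𝕜'] K') (a b : g') :
    sweedlerOp 𝕜' K' act (c • μ) T a b = c • sweedlerOp 𝕜' K' act μ T a b := by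
  induction T using TensorProduct.induction_on with
  | zero => simp
  | tmul k l => simp [sweedlerOp_tmul]
  | add s t hs ht => simp [map_add, LinearMap.add_apply, hs, ht]

/-- `sweedlerOp` as a map linear in `μ` as well. -/
noncomputable def muS (act : K' →ₗ[𝕜'] g' →ₗ[𝕜'] g') (T : K' ⊗[𝕜'] K') :
    (g' →ₗ[𝕜'] g' →ₗ[𝕜'] g') →ₗ[𝕜'] (g' →ₗ[𝕜'] g' →ₗ[𝕜'] g') where
  toFun μ := sweedlerOp 𝕜' K' act μ T
  map_add' μ μ' := by ext a b; simp [sweedlerOp_mu_add]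
  map_smul' c μ := by ext a b; simp [sweedlerOp_mu_smul]

/-- Triple Sweedler-style operator: `triOp act ν (x ⊗ y ⊗ z) u v w = ν (x▷u) (y▷v) (z▷w)`. -/
noncomputable def triOp (act : K' →ₗ[𝕜'] g' →ₗ[𝕜'] g')
    (ν : g' →ₗ[𝕜'] g' →ₗ[𝕜'] g' →ₗ[𝕜'] g') :
    K' ⊗[𝕜'] (K' ⊗[𝕜'] K') →ₗ[𝕜'] g' →ₗ[𝕜'] g' →ₗ[𝕜'] g' →ₗ[𝕜'] g' :=
  TensorProduct.lift <| LinearMap.mk₂ 𝕜'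
    (fun x s => (muS act s).comp (ν.comp (act x)))
    (fun x x' s => by ext u a b; simp [map_add, LinearMap.add_apply])
    (fun c x s => by ext u a b; simp [map_smul])
    (fun x s s' => by ext u a b; simp [muS, map_add, LinearMap.add_apply])
    (fun c x s => by ext u a b; simp [muS, map_smul])

lemma triOp_tmul (act : K' →ₗ[𝕜'] g' →ₗ[𝕜'] g') (ν : g' →ₗ[𝕜'] g' →ₗ[𝕜'] g' →ₗ[𝕜'] g')
    (x y z : K') (u v w : g') :
    triOp act ν (x ⊗ₜ (y ⊗ₜ z)) u v w = ν (act x u) (act y v) (act z w) := by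
  simp [triOp, muS, sweedlerOp_tmul]

/-- `u v w ↦ br u (br v w)`. -/
noncomputable def nuL (br : g' →ₗ[𝕜'] g' →ₗ[𝕜'] g') : g' →ₗ[𝕜'] g' →ₗ[𝕜'] g' →ₗ[𝕜'] g' :=
  LinearMap.mk₂ 𝕜' (fun u v => (br u).comp (br v))
    (fun u u' v => by ext w; simp [map_add, LinearMap.add_apply])
    (fun c u v => by ext w; simp [map_smul])
    (fun u v v' => by ext w; simp [map_add, LinearMap.add_apply])
    (fun c u v => by ext w; simp [map_smul])

/-- `u v w ↦ br (br u v) w`. -/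
noncomputable def nuA (br : g' →ₗ[𝕜'] g' →ₗ[𝕜'] g') : g' →ₗ[𝕜'] g' →ₗ[𝕜'] g' →ₗ[𝕜'] g' :=
  LinearMap.mk₂ 𝕜' (fun u v => br (br u v))
    (fun u u' v => by simp [map_add])
    (fun c u v => by simp [map_smul])
    (fun u v v' => by simp [map_add])
    (fun c u v => by simp [map_smul])

@[simp] lemma nuL_apply (br : g' →ₗ[𝕜'] g' →ₗ[𝕜'] g') (u v w : g') :
    nuL br u v w = br u (br v w) := rfl

@[simp] lemma nuA_apply (br : g' →ₗ[𝕜'] g' →ₗ[𝕜'] g') (u v w : g') :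
    nuA br u v w = br (br u v) w := rfl

end Aux16

section Aux16b

variable (𝕜' : Type*) [CommRing 𝕜'] (K' : Type*) [Ring K'] [HopfAlgebra 𝕜' K']

/-- flip of the first two tensor factors, as an algebra equivalence. -/
noncomputable def sig : K' ⊗[𝕜'] (K' ⊗[𝕜'] K') ≃ₐ[𝕜'] K' ⊗[𝕜'] (K' ⊗[𝕜'] K') :=
  (Algebra.TensorProduct.assoc 𝕜' 𝕜' 𝕜' K' K' K').symm.trans
    ((Algebra.TensorProduct.congr (Algebra.TensorProduct.comm 𝕜' K' K') AlgEquiv.refl).trans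
      (Algebra.TensorProduct.assoc 𝕜' 𝕜' 𝕜' K' K' K'))

variable {𝕜' K'}

lemma comm_eq_algComm (t : K' ⊗[𝕜'] K') :
    (TensorProduct.comm 𝕜' K' K') t = (Algebra.TensorProduct.comm 𝕜' K' K') t := rfl

lemma comm_mul (a b : K' ⊗[𝕜'] K') :
    (TensorProduct.comm 𝕜' K' K') (a * b)
      = (TensorProduct.comm 𝕜' K' K') a * (TensorProduct.comm 𝕜' K' K') b := by
  simp only [comm_eq_algComm, map_mul]

lemma comm_comm (a : K' ⊗[𝕜'] K') :
    (TensorProduct.comm 𝕜' K' K') ((TensorProduct.comm 𝕜' K' K') a) = a := by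
  induction a using TensorProduct.induction_on with
  | zero => simp
  | tmul x y => simp
  | add s t hs ht => simp [map_add, hs, ht]

lemma sig_tmul (x y z : K') :
    sig 𝕜' K' (x ⊗ₜ (y ⊗ₜ z)) = y ⊗ₜ (x ⊗ₜ z) := by simp [sig]

@[simp] lemma ins12_tmul (a b : K') :
    ins12 𝕜' K' (a ⊗ₜ b) = a ⊗ₜ (b ⊗ₜ (1 : K')) := by simp [ins12]

@[simp] lemma ins23_apply (s : K' ⊗[𝕜'] K') :
    ins23 𝕜' K' s = (1 : K') ⊗ₜ s := rfl

lemma comul23_tmul (x y : K') :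
    comul23 𝕜' K' (x ⊗ₜ y) = x ⊗ₜ (Coalgebra.comul y : K' ⊗[𝕜'] K') := by
  simp [comul23]

lemma assoc_split (s : K' ⊗[𝕜'] K') (y : K') :
    (Algebra.TensorProduct.assoc 𝕜' 𝕜' 𝕜' K' K' K') (s ⊗ₜ y)
      = ins12 𝕜' K' s * ((1 : K') ⊗ₜ ((1 : K') ⊗ₜ y)) := by
  induction s using TensorProduct.induction_on with
  | zero => simp [TensorProduct.zero_tmul]
  | tmul a b => simp [Algebra.TensorProduct.tmul_mul_tmul]
  | add s t hs ht => simp only [TensorProduct.add_tmul, map_add, hs, ht, add_mul]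

lemma comul12_split (x y : K') :
    comul12 𝕜' K' (x ⊗ₜ y)
      = ins12 𝕜' K' (Coalgebra.comul x) * ((1 : K') ⊗ₜ ((1 : K') ⊗ₜ y)) := by
  simp [comul12, assoc_split]

lemma ins3_comm_ins12 (y : K') (s : K' ⊗[𝕜'] K') :
    ((1 : K') ⊗ₜ ((1 : K') ⊗ₜ y) : K' ⊗[𝕜'] (K' ⊗[𝕜'] K')) * ins12 𝕜' K' s
      = ins12 𝕜' K' s * ((1 : K') ⊗ₜ ((1 : K') ⊗ₜ y)) := by
  induction s using TensorProduct.induction_on with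
  | zero => simp
  | tmul a b => simp [Algebra.TensorProduct.tmul_mul_tmul]
  | add s t hs ht => simp [map_add, add_mul, mul_add, hs, ht]

lemma sig_ins12 (s : K' ⊗[𝕜'] K') :
    sig 𝕜' K' (ins12 𝕜' K' s) = ins12 𝕜' K' ((TensorProduct.comm 𝕜' K' K') s) := by
  induction s using TensorProduct.induction_on with
  | zero => simp
  | tmul a b => simp [sig_tmul]
  | add s t hs ht => simp [map_add, hs, ht]

lemma sig_ins3 (y : K') :
    sig 𝕜' K' ((1 : K') ⊗ₜ ((1 : K') ⊗ₜ y)) = (1 : K') ⊗ₜ ((1 : K') ⊗ₜ y) := by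
  simpa using sig_tmul (𝕜' := 𝕜') (1 : K') 1 y

end Aux16b

section Aux16c

variable {𝕜' : Type*} [CommRing 𝕜'] {K' : Type*} [Ring K'] [HopfAlgebra 𝕜' K']
variable {g' : Type*} [AddCommGroup g'] [Module 𝕜' g']
variable {act : K' →ₗ[𝕜'] g' →ₗ[𝕜'] g'}

/-- Lemma A: `Φ_μ(S·T) u v = Φ_{Φ_μ(S)}(T) u v`. -/
lemma sweedlerOp_mul (hrep : IsRep 𝕜' K' act) (μ : g' →ₗ[𝕜'] g' →ₗ[𝕜'] g')
    (S T : K' ⊗[𝕜'] K') (u v : g') :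
    sweedlerOp 𝕜' K' act μ (S * T) u v
      = sweedlerOp 𝕜' K' act (sweedlerOp 𝕜' K' act μ S) T u v := by
  induction T using TensorProduct.induction_on with
  | zero => simp
  | tmul k l =>
    induction S using TensorProduct.induction_on with
    | zero => simp [sweedlerOp_tmul]
    | tmul a b => simp [Algebra.TensorProduct.tmul_mul_tmul, sweedlerOp_tmul, hrep.1]
    | add s t hs ht =>
      simp [add_mul, map_add, LinearMap.add_apply, sweedlerOp_mu_add, hs, ht]
  | add s t hs ht => simp [mul_add, map_add, LinearMap.add_apply, hs, ht]

/-- Lemma B: generalized equivariance. -/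
lemma act_sweedlerOp (hrep : IsRep 𝕜' K' act) {R : K' ⊗[𝕜'] K'}
    {br : g' →ₗ[𝕜'] g' →ₗ[𝕜'] g'} (hbr : IsBraidedLie 𝕜' K' act R br)
    (k : K') (T : K' ⊗[𝕜'] K') (u v : g') :
    act k (sweedlerOp 𝕜' K' act br T u v)
      = sweedlerOp 𝕜' K' act br ((Coalgebra.comul k : K' ⊗[𝕜'] K') * T) u v := by
  induction T using TensorProduct.induction_on with
  | zero => simp
  | tmul m n =>
    rw [sweedlerOp_tmul, hbr.1, sweedlerOp_mul hrep, sweedlerOp_tmul]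
  | add s t hs ht => simp [map_add, mul_add, LinearMap.add_apply, hs, ht]

/-- Lemma C: generalized braided antisymmetry. -/
lemma sweedlerOp_antisym (hrep : IsRep 𝕜' K' act) {R : K' ⊗[𝕜'] K'}
    {br : g' →ₗ[𝕜'] g' →ₗ[𝕜'] g'} (hbr : IsBraidedLie 𝕜' K' act R br)
    (T : K' ⊗[𝕜'] K') (u v : g') :
    sweedlerOp 𝕜' K' act br T u v
      = - sweedlerOp 𝕜' K' act br ((TensorProduct.comm 𝕜' K' K') (R * T)) v u := by
  induction T using TensorProduct.induction_on with
  | zero => simp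
  | tmul m n =>
    rw [sweedlerOp_tmul, hbr.2.1, comm_mul, TensorProduct.comm_tmul,
      sweedlerOp_mul hrep, sweedlerOp_tmul]
  | add s t hs ht =>
    simp only [map_add, mul_add, LinearMap.add_apply, hs, ht, neg_add]

/-- Lemma (L3): absorbing a pure tensor in the first two slots of `triOp`. -/
lemma triOp_mul_ins12 (hrep : IsRep 𝕜' K' act)
    (ν : g' →ₗ[𝕜'] g' →ₗ[𝕜'] g' →ₗ[𝕜'] g')
    (T : K' ⊗[𝕜'] (K' ⊗[𝕜'] K')) (a b : K') (p q r : g') :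
    triOp act ν (T * ins12 𝕜' K' (a ⊗ₜ b)) p q r
      = triOp act ν T (act a p) (act b q) r := by
  induction T using TensorProduct.induction_on with
  | zero => simp
  | tmul x s =>
    induction s using TensorProduct.induction_on with
    | zero => simp [TensorProduct.tmul_zero]
    | tmul y z =>
      simp [Algebra.TensorProduct.tmul_mul_tmul, triOp_tmul, hrep.1]
    | add s t hs ht =>
      simp only [TensorProduct.tmul_add, add_mul, map_add, LinearMap.add_apply, hs, ht]
  | add s t hs ht =>
    simp only [add_mul, map_add, LinearMap.add_apply, hs, ht]

/-- Lemma (L2). -/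
lemma triOp_nuL_tmul (br : g' →ₗ[𝕜'] g' →ₗ[𝕜'] g')
    (x : K') (s : K' ⊗[𝕜'] K') (u v w : g') :
    triOp act (nuL br) (x ⊗ₜ s) u v w
      = br (act x u) (sweedlerOp 𝕜' K' act br s v w) := by
  induction s using TensorProduct.induction_on with
  | zero => simp [TensorProduct.tmul_zero]
  | tmul y z => simp [triOp_tmul, sweedlerOp_tmul]
  | add s t hs ht =>
    simp only [TensorProduct.tmul_add, map_add, LinearMap.add_apply, hs, ht]

/-- Lemma (A2). -/
lemma triOp_nuA_split (br : g' →ₗ[𝕜'] g' →ₗ[𝕜'] g')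
    (s : K' ⊗[𝕜'] K') (z : K') (u v w : g') :
    triOp act (nuA br) (ins12 𝕜' K' s * ((1 : K') ⊗ₜ ((1 : K') ⊗ₜ z))) u v w
      = br (sweedlerOp 𝕜' K' act br s u v) (act z w) := by
  induction s using TensorProduct.induction_on with
  | zero => simp
  | tmul k l =>
    simp [Algebra.TensorProduct.tmul_mul_tmul, triOp_tmul, sweedlerOp_tmul]
  | add s t hs ht =>
    simp only [map_add, add_mul, LinearMap.add_apply, hs, ht]

end Aux16c

section Aux16d

variable {𝕜' : Type*} [CommRing 𝕜'] {K' : Type*} [Ring K'] [HopfAlgebra 𝕜' K']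
variable {g' : Type*} [AddCommGroup g'] [Module 𝕜' g']
variable {act : K' →ₗ[𝕜'] g' →ₗ[𝕜'] g'}

/-- Step I: left-nested twisted bracket as a `triOp`. -/
lemma stepI (hrep : IsRep 𝕜' K' act) {R : K' ⊗[𝕜'] K'}
    {br : g' →ₗ[𝕜'] g' →ₗ[𝕜'] g'} (hbr : IsBraidedLie 𝕜' K' act R br)
    (Fi : K' ⊗[𝕜'] K') (T : K' ⊗[𝕜'] K') (u v w : g') :
    sweedlerOp 𝕜' K' act br T u (sweedlerOp 𝕜' K' act br Fi v w)
      = triOp act (nuL br) (comul23 𝕜' K' T * ins23 𝕜' K' Fi) u v w := by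
  induction T using TensorProduct.induction_on with
  | zero => simp
  | tmul x y =>
    rw [sweedlerOp_tmul, act_sweedlerOp hrep hbr, ← triOp_nuL_tmul]
    congr 1
    rw [comul23_tmul, ins23_apply, Algebra.TensorProduct.tmul_mul_tmul, mul_one]
  | add s t hs ht =>
    simp only [map_add, add_mul, LinearMap.add_apply, hs, ht]

/-- Step II: right-nested twisted bracket as a `triOp`. -/
lemma stepII (hrep : IsRep 𝕜' K' act) {R : K' ⊗[𝕜'] K'}
    {br : g' →ₗ[𝕜'] g' →ₗ[𝕜'] g'} (hbr : IsBraidedLie 𝕜' K' act R br)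
    (Fi : K' ⊗[𝕜'] K') (T : K' ⊗[𝕜'] K') (u v w : g') :
    sweedlerOp 𝕜' K' act br T (sweedlerOp 𝕜' K' act br Fi u v) w
      = triOp act (nuA br) (comul12 𝕜' K' T * ins12 𝕜' K' Fi) u v w := by
  induction T using TensorProduct.induction_on with
  | zero => simp
  | tmul x y =>
    rw [sweedlerOp_tmul, act_sweedlerOp hrep hbr, ← triOp_nuA_split]
    have he : ins12 𝕜' K' ((Coalgebra.comul x : K' ⊗[𝕜'] K') * Fi)
          * ((1 : K') ⊗ₜ ((1 : K') ⊗ₜ y))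
        = comul12 𝕜' K' (x ⊗ₜ y) * ins12 𝕜' K' Fi := by
      rw [map_mul, comul12_split, mul_assoc, mul_assoc, ins3_comm_ins12]
    rw [he]
  | add s t hs ht =>
    simp only [map_add, add_mul, LinearMap.add_apply, hs, ht]

/-- Step III: the braided correction term as a `triOp`. -/
lemma stepIII (hrep : IsRep 𝕜' K' act) {R : K' ⊗[𝕜'] K'}
    {br : g' →ₗ[𝕜'] g' →ₗ[𝕜'] g'} (hbr : IsBraidedLie 𝕜' K' act R br)
    (Fi : K' ⊗[𝕜'] K') (S : K' ⊗[𝕜'] K') (u v w : g') :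
    sweedlerOp 𝕜' K' act
        ((sweedlerOp 𝕜' K' act br Fi).compl₂ ((sweedlerOp 𝕜' K' act br Fi).flip w)) S v u
      = triOp act (nuL br)
          ((comul23 𝕜' K' Fi * ins23 𝕜' K' Fi) * ins12 𝕜' K' S) v u w := by
  induction S using TensorProduct.induction_on with
  | zero => simp
  | tmul a b =>
    rw [sweedlerOp_tmul, triOp_mul_ins12 hrep]
    simp only [LinearMap.compl₂_apply, LinearMap.flip_apply]
    exact stepI hrep hbr Fi Fi (act a v) (act b u) w
  | add s t hs ht =>
    simp only [map_add, mul_add, LinearMap.add_apply, hs, ht]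

/-- auxiliary for Step IV. -/
lemma stepIVb (hrep : IsRep 𝕜' K' act) (br : g' →ₗ[𝕜'] g' →ₗ[𝕜'] g')
    (S : K' ⊗[𝕜'] K') (x y z : K') (u v w : g') :
    sweedlerOp 𝕜' K' act (br.compl₂ (br.flip (act z w))) S (act y v) (act x u)
      = triOp act (nuL br) (ins12 𝕜' K' S * (y ⊗ₜ (x ⊗ₜ z))) v u w := by
  induction S using TensorProduct.induction_on with
  | zero => simp
  | tmul a b =>
    simp [Algebra.TensorProduct.tmul_mul_tmul, sweedlerOp_tmul, triOp_tmul, hrep.1]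
  | add s t hs ht =>
    simp only [map_add, add_mul, LinearMap.add_apply, hs, ht]

/-- Step IV: generalized braided Jacobi identity at the `triOp` level. -/
lemma stepIV (hrep : IsRep 𝕜' K' act) {R : K' ⊗[𝕜'] K'}
    {br : g' →ₗ[𝕜'] g' →ₗ[𝕜'] g'} (hbr : IsBraidedLie 𝕜' K' act R br)
    (T : K' ⊗[𝕜'] (K' ⊗[𝕜'] K')) (u v w : g') :
    triOp act (nuL br) T u v w
      = triOp act (nuA br) T u v w
        + triOp act (nuL br)
            (ins12 𝕜' K' ((TensorProduct.comm 𝕜' K' K') R) * sig 𝕜' K' T) v u w := by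
  induction T using TensorProduct.induction_on with
  | zero => simp
  | tmul x s =>
    induction s using TensorProduct.induction_on with
    | zero => simp [TensorProduct.tmul_zero]
    | tmul y z =>
      rw [triOp_tmul, nuL_apply, hbr.2.2, sig_tmul, triOp_tmul, nuA_apply,
        stepIVb hrep br]
    | add s t hs ht =>
      simp only [TensorProduct.tmul_add, map_add, mul_add, LinearMap.add_apply, hs, ht]
      abel
  | add s t hs ht =>
    simp only [map_add, mul_add, LinearMap.add_apply, hs, ht]
    abel

end Aux16d

section Aux16e

variable {𝕜' : Type*} [CommRing 𝕜'] {K' : Type*} [Ring K'] [HopfAlgebra 𝕜' K']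

/-- Step Va: quasi-cocommutativity pushed through `ins12`/`sig`. -/
lemma stepVa {R : K' ⊗[𝕜'] K'}
    (hq : ∀ k : K', (TensorProduct.comm 𝕜' K' K') (Coalgebra.comul k) * R
      = R * (Coalgebra.comul k : K' ⊗[𝕜'] K')) (T : K' ⊗[𝕜'] K') :
    ins12 𝕜' K' ((TensorProduct.comm 𝕜' K' K') R) * sig 𝕜' K' (comul12 𝕜' K' T)
      = comul12 𝕜' K' T * ins12 𝕜' K' ((TensorProduct.comm 𝕜' K' K') R) := by
  induction T using TensorProduct.induction_on with
  | zero => simp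
  | tmul x y =>
    have hq' : (TensorProduct.comm 𝕜' K' K') R
          * (TensorProduct.comm 𝕜' K' K') (Coalgebra.comul x)
        = (Coalgebra.comul x : K' ⊗[𝕜'] K') * (TensorProduct.comm 𝕜' K' K') R := by
      have h := congrArg (TensorProduct.comm 𝕜' K' K') (hq x)
      rw [comm_mul, comm_mul, comm_comm] at h
      exact h.symm
    rw [comul12_split, map_mul, sig_ins12, sig_ins3]
    calc ins12 𝕜' K' ((TensorProduct.comm 𝕜' K' K') R)
          * (ins12 𝕜' K' ((TensorProduct.comm 𝕜' K' K') (Coalgebra.comul x))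
            * ((1 : K') ⊗ₜ ((1 : K') ⊗ₜ y)))
        = ins12 𝕜' K' ((TensorProduct.comm 𝕜' K' K') R
            * (TensorProduct.comm 𝕜' K' K') (Coalgebra.comul x))
            * ((1 : K') ⊗ₜ ((1 : K') ⊗ₜ y)) := by
          rw [← mul_assoc, ← map_mul]
      _ = ins12 𝕜' K' ((Coalgebra.comul x : K' ⊗[𝕜'] K')
            * (TensorProduct.comm 𝕜' K' K') R) * ((1 : K') ⊗ₜ ((1 : K') ⊗ₜ y)) := by
          rw [hq']
      _ = ins12 𝕜' K' (Coalgebra.comul x)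
            * (((1 : K') ⊗ₜ ((1 : K') ⊗ₜ y))
              * ins12 𝕜' K' ((TensorProduct.comm 𝕜' K' K') R)) := by
          rw [map_mul, mul_assoc, ins3_comm_ins12]
      _ = ins12 𝕜' K' (Coalgebra.comul x) * ((1 : K') ⊗ₜ ((1 : K') ⊗ₜ y))
            * ins12 𝕜' K' ((TensorProduct.comm 𝕜' K' K') R) := by
          rw [mul_assoc]
  | add s t hs ht => simp only [map_add, mul_add, add_mul, hs, ht]

/-- the inverse of the cocycle condition. -/
lemma cocycleInv {F Fi : K' ⊗[𝕜'] K'} (hF : IsTwist 𝕜' K' F Fi) :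
    comul12 𝕜' K' Fi * ins12 𝕜' K' Fi = comul23 𝕜' K' Fi * ins23 𝕜' K' Fi := by
  have h1 : (comul12 𝕜' K' Fi * ins12 𝕜' K' Fi) * (ins12 𝕜' K' F * comul12 𝕜' K' F)
      = 1 := by
    rw [mul_assoc, ← mul_assoc (ins12 𝕜' K' Fi), ← map_mul, hF.inv_mul, map_one,
      one_mul, ← map_mul, hF.inv_mul, map_one]
  have h2 : (ins23 𝕜' K' F * comul23 𝕜' K' F) * (comul23 𝕜' K' Fi * ins23 𝕜' K' Fi)
      = 1 := by
    rw [mul_assoc, ← mul_assoc (comul23 𝕜' K' F), ← map_mul, hF.mul_inv, map_one,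
      one_mul, ← map_mul, hF.mul_inv, map_one]
  refine left_inv_eq_right_inv ?_ h2
  rw [← hF.cocycle]
  exact h1

/-- Step Vb. -/
lemma stepVb {F Fi R : K' ⊗[𝕜'] K'}
    (hq : ∀ k : K', (TensorProduct.comm 𝕜' K' K') (Coalgebra.comul k) * R
      = R * (Coalgebra.comul k : K' ⊗[𝕜'] K')) (hFi : Fi * F = 1) :
    ins12 𝕜' K' ((TensorProduct.comm 𝕜' K' K') R)
        * sig 𝕜' K' (comul12 𝕜' K' Fi * ins12 𝕜' K' Fi)
      = (comul12 𝕜' K' Fi * ins12 𝕜' K' Fi)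
        * ins12 𝕜' K' ((TensorProduct.comm 𝕜' K' K') (twistR 𝕜' K' F Fi R)) := by
  have h1 : (TensorProduct.comm 𝕜' K' K') (twistR 𝕜' K' F Fi R)
      = F * (TensorProduct.comm 𝕜' K' K') R * (TensorProduct.comm 𝕜' K' K') Fi := by
    simp only [twistR, comm_mul, comm_comm]
  have h2 : Fi * (F * (TensorProduct.comm 𝕜' K' K') R * (TensorProduct.comm 𝕜' K' K') Fi)
      = (TensorProduct.comm 𝕜' K' K') R * (TensorProduct.comm 𝕜' K' K') Fi := by
    rw [← mul_assoc, ← mul_assoc, hFi, one_mul]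
  have h2' : ins12 𝕜' K' Fi
        * ins12 𝕜' K' (F * (TensorProduct.comm 𝕜' K' K') R
          * (TensorProduct.comm 𝕜' K' K') Fi)
      = ins12 𝕜' K' ((TensorProduct.comm 𝕜' K' K') R
          * (TensorProduct.comm 𝕜' K' K') Fi) := by
    rw [← map_mul, h2]
  rw [map_mul (sig 𝕜' K'), sig_ins12, ← mul_assoc, stepVa hq, h1, mul_assoc,
    ← map_mul, mul_assoc (comul12 𝕜' K' Fi), h2']

end Aux16e

/-- Twisting a braided Lie algebra `g` associated with a triangular Hopf
algebra `(K, R)` by a twist `F` yields a braided Lie algebra over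
`(K_F, R_F = F₂₁ R F⁻¹)` with bracket `[u,v]_F = [F̄ᵅ ▷ u, F̄_α ▷ v]`, where
equivariance is with respect to the twisted coproduct `Δ_F`. -/
theorem twisted_braided_lie_algebra
    (R Ri : K ⊗[𝕜] K) (hQT : QuasiTri 𝕜 K R Ri)
    (htri : (TensorProduct.comm 𝕜 K K) R = Ri)
    (F Fi : K ⊗[𝕜] K) (hF : IsTwist 𝕜 K F Fi)
    (act : K →ₗ[𝕜] g →ₗ[𝕜] g) (hrep : IsRep 𝕜 K act)
    (br : g →ₗ[𝕜] g →ₗ[𝕜] g) (hbr : IsBraidedLie 𝕜 K act R br) :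
    (∀ (k : K) (u v : g),
      act k (sweedlerOp 𝕜 K act br Fi u v)
        = sweedlerOp 𝕜 K act (sweedlerOp 𝕜 K act br Fi)
            (twistComul 𝕜 K F Fi k) u v)
    ∧ (∀ u v : g,
      sweedlerOp 𝕜 K act br Fi u v
        = - sweedlerOp 𝕜 K act (sweedlerOp 𝕜 K act br Fi)
              ((TensorProduct.comm 𝕜 K K) (twistR 𝕜 K F Fi R)) v u)
    ∧ (∀ u v w : g,
      sweedlerOp 𝕜 K act br Fi u (sweedlerOp 𝕜 K act br Fi v w)
        = sweedlerOp 𝕜 K act br Fi (sweedlerOp 𝕜 K act br Fi u v) w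
          + sweedlerOp 𝕜 K act
              ((sweedlerOp 𝕜 K act br Fi).compl₂
                ((sweedlerOp 𝕜 K act br Fi).flip w))
              ((TensorProduct.comm 𝕜 K K) (twistR 𝕜 K F Fi R)) v u) := by
  refine ⟨?_, ?_, ?_⟩
  · -- equivariance for the twisted coproduct
    intro k u v
    have he : Fi * twistComul 𝕜 K F Fi k = (Coalgebra.comul k : K ⊗[𝕜] K) * Fi := by
      simp only [twistComul, LinearMap.comp_apply, LinearMap.mulLeft_apply,
        LinearMap.mulRight_apply]
      rw [← mul_assoc, hF.inv_mul, one_mul]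
    rw [act_sweedlerOp hrep hbr, ← sweedlerOp_mul hrep, he]
  · -- braided antisymmetry for the twisted R-matrix
    intro u v
    have he : Fi * (TensorProduct.comm 𝕜 K K) (twistR 𝕜 K F Fi R)
        = (TensorProduct.comm 𝕜 K K) (R * Fi) := by
      simp only [twistR, comm_mul, comm_comm]
      rw [← mul_assoc, ← mul_assoc, hF.inv_mul, one_mul]
    rw [sweedlerOp_antisym hrep hbr Fi u v, ← sweedlerOp_mul hrep, he]
  · -- braided Jacobi identity for the twisted R-matrix
    intro u v w
    have hG : comul12 𝕜 K Fi * ins12 𝕜 K Fi = comul23 𝕜 K Fi * ins23 𝕜 K Fi :=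
      cocycleInv hF
    have hE : ins12 𝕜 K ((TensorProduct.comm 𝕜 K K) R)
          * sig 𝕜 K (comul23 𝕜 K Fi * ins23 𝕜 K Fi)
        = (comul23 𝕜 K Fi * ins23 𝕜 K Fi)
          * ins12 𝕜 K ((TensorProduct.comm 𝕜 K K) (twistR 𝕜 K F Fi R)) := by
      rw [← hG]
      exact stepVb hQT.quasi hF.inv_mul
    rw [stepI hrep hbr Fi Fi u v w, stepII hrep hbr Fi Fi u v w,
      stepIII hrep hbr Fi ((TensorProduct.comm 𝕜 K K) (twistR 𝕜 K F Fi R)) u v w,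
      stepIV hrep hbr (comul23 𝕜 K Fi * ins23 𝕜 K Fi) u v w, hG, hE]
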